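/- Let Γ be a finite simplicial graph focused at a vertex c with trivial graph automorphism group, with dominated vertices labeled x_1, …, x_l (dominated by but not adjacent to c) and x_{l+1}, …, x_m (dominated by and adjacent to c), and components P_1, …, P_k of the induced subgraph on V \ st(c) with P_i = {x_i} for i ≤ l. Writing τ̄_i and χ̄_j for the images in Out(A_Γ) of τ_{c x_i} and χ_{c,P_j}, and ῑ_v for the image of the inversion ι_v, the following relations hold in Out(A_Γ): (1) ῑ_c χ̄_j ῑ_c = χ̄_j⁻¹ for 1 ≤ j ≤ k−1; (2) ῑ_c τ̄_i ῑ_c = τ̄_i⁻¹ for 1 ≤ i ≤ m; (3) ῑ_r χ̄_j ῑ_r = χ̄_j for 1 ≤ j ≤ k−1 and every vertex r ≠ c; (4) ῑ_r τ̄_i ῑ_r = τ̄_i for 1 ≤ i ≤ m and every vertex r ∉ {c, x_i}; (5) ῑ_{x_i} τ̄_i ῑ_{x_i} = χ̄_i · τ̄_i⁻¹ for 1 ≤ i ≤ l; (6) ῑ_{x_i} τ̄_i ῑ_{x_i} = τ̄_i⁻¹ for l+1 ≤ i ≤ m. -/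

import Mathlib

noncomputable section

/-- The subgroup of inner automorphisms inside `MulAut G`. -/
def Inn (G : Type) [Group G] : Subgroup (MulAut G) :=
  (MulAut.conj : G →* MulAut G).range

instance Inn.normal (G : Type) [Group G] : (Inn G).Normal := by
  constructor
  rintro x ⟨g, rfl⟩ φ
  refine ⟨φ g, ?_⟩
  ext h
  simp [MulAut.mul_apply, MulAut.conj_apply, map_mul, map_inv]

/-- The outer automorphism group of `G`. -/
abbrev Out (G : Type) [Group G] := MulAut G ⧸ Inn G

/-- The set of commutator relators defining the RAAG of a graph. -/
def raagRels {V : Type} (G : SimpleGraph V) : Set (FreeGroup V) :=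
  {r | ∃ u v : V, G.Adj u v ∧
    r = FreeGroup.of u * FreeGroup.of v * (FreeGroup.of u)⁻¹ * (FreeGroup.of v)⁻¹}

/-- The right-angled Artin group of a graph. -/
abbrev RAAG {V : Type} (G : SimpleGraph V) := PresentedGroup (raagRels G)

/-- The standard generator of `RAAG G` corresponding to a vertex. -/
def gen {V : Type} (G : SimpleGraph V) (v : V) : RAAG G := PresentedGroup.of v

/-- The star of a vertex: the vertex together with its neighbours. -/
def star {V : Type} (G : SimpleGraph V) (v : V) : Set V := insert v (G.neighborSet v)

/-- `u` dominates `v` if `lk(v) ⊆ st(u)`. -/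
def Dominates {V : Type} (G : SimpleGraph V) (u v : V) : Prop :=
  G.neighborSet v ⊆ star G u

/-- A graph has trivial automorphism group. -/
def TrivialAut {V : Type} (G : SimpleGraph V) : Prop := ∀ e : G ≃g G, ∀ v, e v = v

/-- A graph is focused at a vertex `c`. -/
def Focused {V : Type} (G : SimpleGraph V) (c : V) : Prop :=
  (∀ u v : V, u ≠ v → Dominates G u v → u = c) ∧
  ∀ v : V, v ≠ c → (G.induce (star G v)ᶜ).Connected

/-- A graph is austere. -/
def Austere {V : Type} (G : SimpleGraph V) : Prop :=
  TrivialAut G ∧ (∀ u v : V, u ≠ v → ¬Dominates G u v) ∧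
  ∀ v : V, (G.induce (star G v)ᶜ).Connected

/-- `P` is (the vertex set of) a connected component of the induced subgraph on `s`. -/
def IsCompOf {V : Type} (G : SimpleGraph V) (s : Set V) (P : Set V) : Prop :=
  ∃ x : s, P = Subtype.val '' {y : s | (G.induce s).Reachable x y}

/-- `φ` is the inversion at the vertex `v`. -/
def IsInversion {V : Type} (G : SimpleGraph V) (φ : MulAut (RAAG G)) (v : V) : Prop :=
  φ (gen G v) = (gen G v)⁻¹ ∧ ∀ w : V, w ≠ v → φ (gen G w) = gen G w

/-- `φ` is the transvection `τ_{uv}` (`v ↦ uv`). -/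
def IsTransvection {V : Type} (G : SimpleGraph V) (φ : MulAut (RAAG G)) (u v : V) : Prop :=
  u ≠ v ∧ Dominates G u v ∧ φ (gen G v) = gen G u * gen G v ∧
    ∀ w : V, w ≠ v → φ (gen G w) = gen G w

/-- `φ` is the partial conjugation `χ_{v,P}`. -/
def IsPartialConj {V : Type} (G : SimpleGraph V) (φ : MulAut (RAAG G)) (v : V) (P : Set V) :
    Prop :=
  IsCompOf G (star G v)ᶜ P ∧ (∀ u ∈ P, φ (gen G u) = gen G v * gen G u * (gen G v)⁻¹) ∧
    ∀ w : V, w ∉ P → φ (gen G w) = gen G w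

/-- The subgroup `I_Γ` of `Aut(A_Γ)` generated by the inversions. -/
def InvSubgroup {V : Type} (G : SimpleGraph V) : Subgroup (MulAut (RAAG G)) :=
  Subgroup.closure {φ | ∃ v, IsInversion G φ v}

/-- The subgroup `PCT` of `Aut(A_Γ)` generated by transvections and partial conjugations. -/
def PCT {V : Type} (G : SimpleGraph V) : Subgroup (MulAut (RAAG G)) :=
  Subgroup.closure {φ | (∃ u v, IsTransvection G φ u v) ∨ ∃ v P, IsPartialConj G φ v P}

/-- The number `l` of vertices dominated by but not adjacent to `c`. -/
def lInv {V : Type} (G : SimpleGraph V) (c : V) : ℕ :=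
  Nat.card {v : V | v ≠ c ∧ Dominates G c v ∧ ¬G.Adj c v}

/-- The number `m` of vertices (other than `c`) dominated by `c`. -/
def mInv {V : Type} (G : SimpleGraph V) (c : V) : ℕ :=
  Nat.card {v : V | v ≠ c ∧ Dominates G c v}

/-- The number `k` of connected components of `Γ \ st(c)`. -/
def kInv {V : Type} (G : SimpleGraph V) (c : V) : ℕ :=
  Nat.card ((G.induce (star G c)ᶜ).ConnectedComponent)

/-- `GL_n(ℤ)`. -/
abbrev GLZ (n : ℕ) := Matrix.GeneralLinearGroup (Fin n) ℤ

/-- `PGL_n(ℤ)`, the quotient of `GL_n(ℤ)` by its centre `{±I}`. -/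
abbrev PGLZ (n : ℕ) := GLZ n ⧸ Subgroup.center (GLZ n)

/-- The principal level 2 congruence subgroup `Λ_l[2]` of `GL_l(ℤ)`. -/
def congr2 (l : ℕ) : Subgroup (GLZ l) :=
  (Matrix.GeneralLinearGroup.map (Int.castRingHom (ZMod 2)) :
    GLZ l →* Matrix.GeneralLinearGroup (Fin l) (ZMod 2)).ker

/-- The matrix `(1 1 / 0 -1)`. -/
def Bmat : Matrix (Fin 2) (Fin 2) ℤ := !![1, 1; 0, -1]

/-- A block-diagonal `2l × 2l` matrix whose `i`th `2 × 2` diagonal block is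
`Bmat` if `ε i` and the identity otherwise. -/
def Lmat (l : ℕ) (ε : Fin l → Bool) : Matrix (Fin l × Fin 2) (Fin l × Fin 2) ℤ :=
  fun a b =>
    if a.1 = b.1 then (if ε a.1 then Bmat a.2 b.2 else (1 : Matrix (Fin 2) (Fin 2) ℤ) a.2 b.2)
    else 0

/-- `GL_{2l}(ℤ)`, with rows and columns indexed by `Fin l × Fin 2`. -/
abbrev GL2l (l : ℕ) := Matrix.GeneralLinearGroup (Fin l × Fin 2) ℤ

/-- The subgroup `𝓛 ≤ GL_{2l}(ℤ)`. -/
def scriptL (l : ℕ) : Subgroup (GL2l l) :=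
  Subgroup.closure {M : GL2l l |
    ∃ ε : Fin l → Bool, (M : Matrix (Fin l × Fin 2) (Fin l × Fin 2) ℤ) = Lmat l ε}

/-- The index type realizing the block decomposition `d = 2l + p + q`. -/
abbrev BIdx (l p q : ℕ) := (Fin l × Fin 2) ⊕ (Fin p ⊕ Fin q)

/-- The block-diagonal matrix `Diag(D₁, D₂, ε·I_q)` with `D₁ ∈ 𝓛` given by `ε1`,
`D₂` diagonal with entries `d2`, and `ε = e`. -/
def Dmat (l p q : ℕ) (ε1 : Fin l → Bool) (d2 : Fin p → ℤˣ) (e : ℤˣ) :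
    Matrix (BIdx l p q) (BIdx l p q) ℤ := fun a b =>
  match a, b with
  | Sum.inl a, Sum.inl b => Lmat l ε1 a b
  | Sum.inr (Sum.inl i), Sum.inr (Sum.inl j) => if i = j then (d2 i : ℤ) else 0
  | Sum.inr (Sum.inr i), Sum.inr (Sum.inr j) => if i = j then (e : ℤ) else 0
  | _, _ => 0

/-- The subgroup `D ≤ GL_d(ℤ)` generated by `−I_d` and the block-diagonal matrices
`Diag(D₁, D₂, ε·I_q)`. -/
def DSub (l p q : ℕ) : Subgroup (Matrix.GeneralLinearGroup (BIdx l p q) ℤ) :=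
  Subgroup.closure
    ({M | (M : Matrix (BIdx l p q) (BIdx l p q) ℤ) = -1} ∪
     {M | ∃ ε1 d2 e, (M : Matrix (BIdx l p q) (BIdx l p q) ℤ) = Dmat l p q ε1 d2 e})

section helpers

lemma aut_ext {V : Type} {G : SimpleGraph V} {f g : MulAut (RAAG G)}
    (h : ∀ v, f (gen G v) = g (gen G v)) : f = g := by
  apply MulEquiv.toMonoidHom_injective
  apply MonoidHom.eq_of_eqOn_dense (PresentedGroup.closure_range_of (raagRels G))
  rintro _ ⟨v, rfl⟩
  exact h v

lemma gen_comm {V : Type} {G : SimpleGraph V} {u v : V} (h : G.Adj u v) :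
    gen G u * gen G v = gen G v * gen G u := by
  rw [← commutatorElement_eq_one_iff_mul_comm]
  have : ((QuotientGroup.mk (FreeGroup.of u * FreeGroup.of v * (FreeGroup.of u)⁻¹ *
      (FreeGroup.of v)⁻¹) : RAAG G)) = 1 := by
    rw [QuotientGroup.eq_one_iff]
    exact Subgroup.subset_normalClosure ⟨u, v, h, rfl⟩
  simp only [commutatorElement_def, gen, PresentedGroup.of, ← map_mul, ← map_inv]
  exact this

lemma ne_c_of_memP {V : Type} {G : SimpleGraph V} {c : V} {P : Set V}
    (h : IsCompOf G (star G c)ᶜ P) {u : V} (hu : u ∈ P) : u ≠ c := by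
  obtain ⟨x0, rfl⟩ := h
  intro h'
  obtain ⟨⟨y, hy⟩, -, rfl⟩ := hu
  exact hy (by rw [show y = c from h']; exact Set.mem_insert _ _)

end helpers

/-- The relations (1)–(6) describing the action of the inversions on the images of the
transvections and partial conjugations in `Out(A_Γ)`, for a focused graph. -/
theorem stmt17 {V : Type} [Fintype V] (G : SimpleGraph V) (c : V)
    (hF : Focused G c) (hT : TrivialAut G)
    (l m k : ℕ) (hlm : l ≤ m) (hlk : l ≤ k)
    (x : Fin m → V) (hxinj : Function.Injective x)
    (hx : ∀ v : V, (v ≠ c ∧ Dominates G c v) ↔ ∃ i, x i = v)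
    (hxl : ∀ i : Fin m, (i : ℕ) < l ↔ ¬G.Adj c (x i))
    (P : Fin k → Set V) (hPinj : Function.Injective P)
    (hP : ∀ Q : Set V, IsCompOf G (star G c)ᶜ Q ↔ ∃ j, P j = Q)
    (hPl : ∀ (j : Fin k) (hj : (j : ℕ) < l), P j = {x ⟨j, lt_of_lt_of_le hj hlm⟩})
    (τ : Fin m → MulAut (RAAG G)) (hτ : ∀ i, IsTransvection G (τ i) c (x i))
    (χ : Fin k → MulAut (RAAG G)) (hχ : ∀ j, IsPartialConj G (χ j) c (P j))
    (ι : V → MulAut (RAAG G)) (hι : ∀ w : V, IsInversion G (ι w) w) :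
    -- (1)
    (∀ j : Fin k, (j : ℕ) + 1 < k →
      QuotientGroup.mk' (Inn (RAAG G)) (ι c) * QuotientGroup.mk' (Inn (RAAG G)) (χ j) *
          QuotientGroup.mk' (Inn (RAAG G)) (ι c) =
        (QuotientGroup.mk' (Inn (RAAG G)) (χ j))⁻¹) ∧
    -- (2)
    (∀ i : Fin m,
      QuotientGroup.mk' (Inn (RAAG G)) (ι c) * QuotientGroup.mk' (Inn (RAAG G)) (τ i) *
          QuotientGroup.mk' (Inn (RAAG G)) (ι c) =
        (QuotientGroup.mk' (Inn (RAAG G)) (τ i))⁻¹) ∧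
    -- (3)
    (∀ j : Fin k, (j : ℕ) + 1 < k → ∀ r : V, r ≠ c →
      QuotientGroup.mk' (Inn (RAAG G)) (ι r) * QuotientGroup.mk' (Inn (RAAG G)) (χ j) *
          QuotientGroup.mk' (Inn (RAAG G)) (ι r) =
        QuotientGroup.mk' (Inn (RAAG G)) (χ j)) ∧
    -- (4)
    (∀ i : Fin m, ∀ r : V, r ≠ c → r ≠ x i →
      QuotientGroup.mk' (Inn (RAAG G)) (ι r) * QuotientGroup.mk' (Inn (RAAG G)) (τ i) *
          QuotientGroup.mk' (Inn (RAAG G)) (ι r) =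
        QuotientGroup.mk' (Inn (RAAG G)) (τ i)) ∧
    -- (5)
    (∀ (i : Fin m) (hi : (i : ℕ) < l),
      QuotientGroup.mk' (Inn (RAAG G)) (ι (x i)) * QuotientGroup.mk' (Inn (RAAG G)) (τ i) *
          QuotientGroup.mk' (Inn (RAAG G)) (ι (x i)) =
        QuotientGroup.mk' (Inn (RAAG G)) (χ ⟨(i : ℕ), lt_of_lt_of_le hi hlk⟩) *
          (QuotientGroup.mk' (Inn (RAAG G)) (τ i))⁻¹) ∧
    -- (6)
    (∀ i : Fin m, l ≤ (i : ℕ) →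
      QuotientGroup.mk' (Inn (RAAG G)) (ι (x i)) * QuotientGroup.mk' (Inn (RAAG G)) (τ i) *
          QuotientGroup.mk' (Inn (RAAG G)) (ι (x i)) =
        (QuotientGroup.mk' (Inn (RAAG G)) (τ i))⁻¹) := by
  classical
  have hxc : ∀ i : Fin m, x i ≠ c := fun i => ((hx (x i)).mpr ⟨i, rfl⟩).1
  have hPne : ∀ (j : Fin k) (u : V), u ∈ P j → u ≠ c := fun j u hu =>
    ne_c_of_memP (hχ j).1 hu
  refine ⟨?_, ?_, ?_, ?_, ?_, ?_⟩
  -- (1)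
  · intro j _
    have hcP : c ∉ P j := fun h => hPne j c h rfl
    have key : ι c * χ j * ι c * χ j = 1 := by
      apply aut_ext
      intro v
      simp only [MulAut.mul_apply, MulAut.one_apply]
      by_cases hvP : v ∈ P j
      · have hvc : v ≠ c := hPne j v hvP
        rw [(hχ j).2.1 v hvP]
        have e2 : ι c (gen G c * gen G v * (gen G c)⁻¹) =
            (gen G c)⁻¹ * gen G v * gen G c := by
          rw [map_mul, map_mul, map_inv, (hι c).1, (hι c).2 v hvc]
          group
        rw [e2]
        have e3 : χ j ((gen G c)⁻¹ * gen G v * gen G c) = gen G v := by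
          rw [map_mul, map_mul, map_inv, (hχ j).2.2 c hcP, (hχ j).2.1 v hvP]
          group
        rw [e3, (hι c).2 v hvc]
      · by_cases hvc : v = c
        · rw [hvc, (hχ j).2.2 c hcP, (hι c).1, map_inv, (hχ j).2.2 c hcP, map_inv,
            (hι c).1, inv_inv]
        · rw [(hχ j).2.2 v hvP, (hι c).2 v hvc, (hχ j).2.2 v hvP, (hι c).2 v hvc]
    have key' : ι c * χ j * ι c = (χ j)⁻¹ := mul_eq_one_iff_eq_inv.mp key
    rw [← map_mul, ← map_mul, key', map_inv]
  -- (2)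
  · intro i
    have hcx : c ≠ x i := (hxc i).symm
    have key : ι c * τ i * ι c * τ i = 1 := by
      apply aut_ext
      intro v
      simp only [MulAut.mul_apply, MulAut.one_apply]
      by_cases hvx : v = x i
      · rw [hvx, (hτ i).2.2.1]
        have e2 : ι c (gen G c * gen G (x i)) = (gen G c)⁻¹ * gen G (x i) := by
          rw [map_mul, (hι c).1, (hι c).2 (x i) (hxc i)]
        rw [e2]
        have e3 : τ i ((gen G c)⁻¹ * gen G (x i)) = gen G (x i) := by
          rw [map_mul, map_inv, (hτ i).2.2.2 c hcx, (hτ i).2.2.1]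
          group
        rw [e3, (hι c).2 (x i) (hxc i)]
      · by_cases hvc : v = c
        · rw [hvc, (hτ i).2.2.2 c hcx, (hι c).1, map_inv, (hτ i).2.2.2 c hcx,
            map_inv, (hι c).1, inv_inv]
        · rw [(hτ i).2.2.2 v hvx, (hι c).2 v hvc, (hτ i).2.2.2 v hvx, (hι c).2 v hvc]
    have key' : ι c * τ i * ι c = (τ i)⁻¹ := mul_eq_one_iff_eq_inv.mp key
    rw [← map_mul, ← map_mul, key', map_inv]
  -- (3)
  · intro j _ r hrc
    have hcr : c ≠ r := fun h => hrc h.symm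
    have key : ι r * χ j * ι r = χ j := by
      apply aut_ext
      intro v
      simp only [MulAut.mul_apply]
      by_cases hvr : v = r
      · by_cases hvP : r ∈ P j
        · rw [hvr, (hι r).1, map_inv, (hχ j).2.1 r hvP, map_inv, map_mul, map_mul,
            map_inv, (hι r).2 c hcr, (hι r).1]
          group
        · rw [hvr, (hι r).1, map_inv, (hχ j).2.2 r hvP, map_inv, (hι r).1, inv_inv]
      · rw [(hι r).2 v hvr]
        by_cases hvP : v ∈ P j
        · rw [(hχ j).2.1 v hvP, map_mul, map_mul, map_inv, (hι r).2 c hcr, (hι r).2 v hvr]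
        · rw [(hχ j).2.2 v hvP, (hι r).2 v hvr]
    rw [← map_mul, ← map_mul, key]
  -- (4)
  · intro i r hrc hrx
    have hcr : c ≠ r := fun h => hrc h.symm
    have hxr : x i ≠ r := fun h => hrx h.symm
    have key : ι r * τ i * ι r = τ i := by
      apply aut_ext
      intro v
      simp only [MulAut.mul_apply]
      by_cases hvr : v = r
      · rw [hvr, (hι r).1, map_inv, (hτ i).2.2.2 r hrx, map_inv, (hι r).1, inv_inv]
      · by_cases hvx : v = x i
        · rw [hvx, (hι r).2 (x i) hxr, (hτ i).2.2.1, map_mul, (hι r).2 c hcr,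
            (hι r).2 (x i) hxr]
        · rw [(hι r).2 v hvr, (hτ i).2.2.2 v hvx, (hι r).2 v hvr]
    rw [← map_mul, ← map_mul, key]
  -- (5)
  · intro i hi
    set j0 : Fin k := ⟨(i : ℕ), lt_of_lt_of_le hi hlk⟩ with hj0def
    have hPj : P j0 = {x i} := by
      rw [hPl j0 hi]
    have hxmem : x i ∈ P j0 := by rw [hPj]; rfl
    have hχx : χ j0 (gen G (x i)) = gen G c * gen G (x i) * (gen G c)⁻¹ :=
      (hχ j0).2.1 _ hxmem
    have hχw : ∀ w, w ≠ x i → χ j0 (gen G w) = gen G w := fun w hw =>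
      (hχ j0).2.2 w (by rw [hPj]; simpa using hw)
    have hcx : c ≠ x i := (hxc i).symm
    have key : ι (x i) * τ i * ι (x i) * τ i = χ j0 := by
      apply aut_ext
      intro v
      simp only [MulAut.mul_apply]
      by_cases hvx : v = x i
      · rw [hvx, (hτ i).2.2.1]
        have e2 : ι (x i) (gen G c * gen G (x i)) = gen G c * (gen G (x i))⁻¹ := by
          rw [map_mul, (hι (x i)).2 c hcx, (hι (x i)).1]
        rw [e2]
        have e3 : τ i (gen G c * (gen G (x i))⁻¹) =
            gen G c * (gen G (x i))⁻¹ * (gen G c)⁻¹ := by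
          rw [map_mul, map_inv, (hτ i).2.2.2 c hcx, (hτ i).2.2.1]
          group
        rw [e3]
        have e4 : ι (x i) (gen G c * (gen G (x i))⁻¹ * (gen G c)⁻¹) =
            gen G c * gen G (x i) * (gen G c)⁻¹ := by
          rw [map_mul, map_mul, map_inv, map_inv, (hι (x i)).2 c hcx, (hι (x i)).1]
          group
        rw [e4, hχx]
      · rw [(hτ i).2.2.2 v hvx, (hι (x i)).2 v hvx, (hτ i).2.2.2 v hvx,
          (hι (x i)).2 v hvx, hχw v hvx]
    have key' : ι (x i) * τ i * ι (x i) = χ j0 * (τ i)⁻¹ := eq_mul_inv_of_mul_eq key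
    rw [← map_mul, ← map_mul, key', map_mul, map_inv]
  -- (6)
  · intro i hli
    have hAdj : G.Adj c (x i) := by
      by_contra h
      exact absurd ((hxl i).mpr h) (not_lt.mpr hli)
    have hcx : c ≠ x i := (hxc i).symm
    have key : ι (x i) * τ i * ι (x i) * τ i = 1 := by
      apply aut_ext
      intro v
      simp only [MulAut.mul_apply, MulAut.one_apply]
      by_cases hvx : v = x i
      · rw [hvx, (hτ i).2.2.1]
        have e2 : ι (x i) (gen G c * gen G (x i)) = gen G c * (gen G (x i))⁻¹ := by
          rw [map_mul, (hι (x i)).2 c hcx, (hι (x i)).1]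
        rw [e2]
        have e3 : τ i (gen G c * (gen G (x i))⁻¹) =
            gen G c * (gen G (x i))⁻¹ * (gen G c)⁻¹ := by
          rw [map_mul, map_inv, (hτ i).2.2.2 c hcx, (hτ i).2.2.1]
          group
        rw [e3]
        have e4 : ι (x i) (gen G c * (gen G (x i))⁻¹ * (gen G c)⁻¹) =
            gen G c * gen G (x i) * (gen G c)⁻¹ := by
          rw [map_mul, map_mul, map_inv, map_inv, (hι (x i)).2 c hcx, (hι (x i)).1]
          group
        rw [e4, gen_comm hAdj]
        group
      · rw [(hτ i).2.2.2 v hvx, (hι (x i)).2 v hvx, (hτ i).2.2.2 v hvx,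
          (hι (x i)).2 v hvx]
    have key' : ι (x i) * τ i * ι (x i) = (τ i)⁻¹ := mul_eq_one_iff_eq_inv.mp key
    rw [← map_mul, ← map_mul, key', map_inv]
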